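/- arXiv:2407.17068 — 5 statements merged into one kernel-verified Lean document; each statement's English description precedes it below -/
import Mathlib

section
/- Let R be a finite set, c : R → ℕ a coloring, J ⊆ R nonempty, and m := |c(J) ∩ c(R \ J)|. Let {A_1, ..., A_k} be a partition of R such that A_ℓ ∩ J ≠ ∅ for all ℓ. Then ∑_{ℓ=1}^k |c(A_ℓ)| ≥ |c(R \ J)| + k - m. -/
open Finset

/-- Coloring lemma: if `{A_ℓ}` is a partition of `R` with every block meeting `J ⊆ R`, and
`m = |c(J) ∩ c(R \ J)|`, then `∑_ℓ |c(A_ℓ)| ≥ |c(R \ J)| + k - m`. -/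
theorem coloring_partition_lemma {α : Type*} [DecidableEq α]
    (R : Finset α) (c : α → ℕ) (J : Finset α) (hJR : J ⊆ R) (hJne : J.Nonempty)
    (k : ℕ) (A : Fin k → Finset α)
    (hcover : Finset.univ.biUnion A = R)
    (hdisj : ∀ i j : Fin k, i ≠ j → Disjoint (A i) (A j))
    (hmeet : ∀ i : Fin k, (A i ∩ J).Nonempty) :
    ((R \ J).image c).card + k ≤
      (∑ i : Fin k, ((A i).image c).card) + ((J.image c) ∩ ((R \ J).image c)).card := by
  classical
  set T : Finset ℕ := (R \ J).image c with hTdef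
  -- k is positive
  have hk : Nonempty (Fin k) := by
    obtain ⟨y, hy⟩ := hJne
    have hyR : y ∈ R := hJR hy
    rw [← hcover, Finset.mem_biUnion] at hyR
    obtain ⟨i, -, -⟩ := hyR
    exact ⟨i⟩
  -- choose block containing each color of T
  have hIex : ∀ t : ℕ, ∃ i : Fin k, t ∈ T → t ∈ ((A i \ J).image c) := by
    intro t
    by_cases ht : t ∈ T
    · rw [hTdef, Finset.mem_image] at ht
      obtain ⟨y, hy, rfl⟩ := ht
      have hyR : y ∈ R := (Finset.mem_sdiff.mp hy).1
      have hyJ : y ∉ J := (Finset.mem_sdiff.mp hy).2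
      rw [← hcover, Finset.mem_biUnion] at hyR
      obtain ⟨i, -, hyi⟩ := hyR
      exact ⟨i, fun _ => Finset.mem_image_of_mem c (Finset.mem_sdiff.mpr ⟨hyi, hyJ⟩)⟩
    · exact ⟨Classical.arbitrary _, fun h => absurd h ht⟩
  choose I hI using hIex
  -- choose a point of each block inside J
  choose x hx using hmeet
  have hxA : ∀ i, x i ∈ A i := fun i => (Finset.mem_inter.mp (hx i)).1
  have hxJ : ∀ i, x i ∈ J := fun i => (Finset.mem_inter.mp (hx i)).2
  -- goodness: block has a color on J not in T
  have hsex : ∀ i : Fin k, ∃ s : ℕ,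
      (∃ s' ∈ (A i ∩ J).image c, s' ∉ T) → s ∈ (A i ∩ J).image c ∧ s ∉ T := by
    intro i
    by_cases h : ∃ s' ∈ (A i ∩ J).image c, s' ∉ T
    · obtain ⟨s, hs1, hs2⟩ := h
      exact ⟨s, fun _ => ⟨hs1, hs2⟩⟩
    · exact ⟨0, fun h' => absurd h' h⟩
  choose s hs using hsex
  -- the injection
  set g : ℕ ⊕ Fin k → (Σ _ : Fin k, ℕ) ⊕ ℕ := fun z =>
    match z with
    | Sum.inl t => Sum.inl ⟨I t, t⟩
    | Sum.inr i =>
        if ∃ s' ∈ (A i ∩ J).image c, s' ∉ T then Sum.inl ⟨i, s i⟩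
        else if I (c (x i)) = i then Sum.inr (c (x i)) else Sum.inl ⟨i, c (x i)⟩
    with hgdef
  -- bad blocks: every color of A i ∩ J lies in T
  have hbad : ∀ i : Fin k, ¬(∃ s' ∈ (A i ∩ J).image c, s' ∉ T) → c (x i) ∈ T := by
    intro i h
    push_neg at h
    exact h _ (Finset.mem_image_of_mem c (hx i))
  have hmaps : ∀ z ∈ T.disjSum (Finset.univ : Finset (Fin k)),
      g z ∈ (Finset.univ.sigma (fun i => (A i).image c)).disjSum (J.image c ∩ T) := by
    rintro (t | i) hz
    · rw [Finset.inl_mem_disjSum] at hz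
      rw [hgdef]
      simp only [Finset.inl_mem_disjSum, Finset.mem_sigma, Finset.mem_univ, true_and]
      have := hI t hz
      rw [Finset.mem_image] at this
      obtain ⟨y, hy, rfl⟩ := this
      exact Finset.mem_image_of_mem c (Finset.mem_sdiff.mp hy).1
    · rw [hgdef]
      by_cases h : ∃ s' ∈ (A i ∩ J).image c, s' ∉ T
      · simp only [if_pos h, Finset.inl_mem_disjSum, Finset.mem_sigma, Finset.mem_univ, true_and]
        have := (hs i h).1
        rw [Finset.mem_image] at this
        obtain ⟨y, hy, hcy⟩ := this
        rw [← hcy]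
        exact Finset.mem_image_of_mem c (Finset.mem_inter.mp hy).1
      · simp only [if_neg h]
        by_cases h2 : I (c (x i)) = i
        · simp only [if_pos h2, Finset.inr_mem_disjSum, Finset.mem_inter]
          exact ⟨Finset.mem_image_of_mem c (hxJ i), hbad i h⟩
        · simp only [if_neg h2, Finset.inl_mem_disjSum, Finset.mem_sigma, Finset.mem_univ,
            true_and]
          exact Finset.mem_image_of_mem c (hxA i)
  have hsig : ∀ (a a' : Fin k) (b b' : ℕ),
      (⟨a, b⟩ : Σ _ : Fin k, ℕ) = ⟨a', b'⟩ → a = a' ∧ b = b' := by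
    intro a a' b b' h
    cases h
    exact ⟨rfl, rfl⟩
  have hinj : Set.InjOn g (T.disjSum (Finset.univ : Finset (Fin k))) := by
    rintro (t | i) hz (t' | i') hz' heq
    · -- inl, inl
      rw [hgdef] at heq
      simp only [Sum.inl.injEq] at heq
      rw [(hsig _ _ _ _ heq).2]
    · -- inl t, inr i'
      exfalso
      rw [Finset.mem_coe, Finset.inl_mem_disjSum] at hz
      rw [hgdef] at heq
      simp only at heq
      by_cases h : ∃ s' ∈ (A i' ∩ J).image c, s' ∉ T
      · rw [if_pos h] at heq
        simp only [Sum.inl.injEq] at heq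
        exact (hs i' h).2 ((hsig _ _ _ _ heq).2 ▸ hz)
      · rw [if_neg h] at heq
        by_cases h2 : I (c (x i')) = i'
        · rw [if_pos h2] at heq
          exact Sum.inl_ne_inr heq
        · rw [if_neg h2] at heq
          simp only [Sum.inl.injEq] at heq
          obtain ⟨h3, h4⟩ := hsig _ _ _ _ heq
          exact h2 (h4 ▸ h3)
    · -- inr i, inl t'
      exfalso
      rw [Finset.mem_coe, Finset.inl_mem_disjSum] at hz'
      rw [hgdef] at heq
      simp only at heq
      by_cases h : ∃ s' ∈ (A i ∩ J).image c, s' ∉ T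
      · rw [if_pos h] at heq
        simp only [Sum.inl.injEq] at heq
        exact (hs i h).2 ((hsig _ _ _ _ heq).2.symm ▸ hz')
      · rw [if_neg h] at heq
        by_cases h2 : I (c (x i)) = i
        · rw [if_pos h2] at heq
          exact Sum.inl_ne_inr heq.symm
        · rw [if_neg h2] at heq
          simp only [Sum.inl.injEq] at heq
          obtain ⟨h3, h4⟩ := hsig _ _ _ _ heq
          exact h2 (h4 ▸ h3.symm)
    · -- inr, inr
      rw [hgdef] at heq
      simp only at heq
      by_cases h : ∃ s' ∈ (A i ∩ J).image c, s' ∉ T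
      · rw [if_pos h] at heq
        by_cases h' : ∃ s' ∈ (A i' ∩ J).image c, s' ∉ T
        · rw [if_pos h'] at heq
          simp only [Sum.inl.injEq] at heq
          rw [(hsig _ _ _ _ heq).1]
        · rw [if_neg h'] at heq
          by_cases h2 : I (c (x i')) = i'
          · rw [if_pos h2] at heq
            exact absurd heq Sum.inl_ne_inr
          · rw [if_neg h2] at heq
            simp only [Sum.inl.injEq] at heq
            rw [(hsig _ _ _ _ heq).1]
      · rw [if_neg h] at heq
        by_cases h' : ∃ s' ∈ (A i' ∩ J).image c, s' ∉ T
        · rw [if_pos h'] at heq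
          by_cases h2 : I (c (x i)) = i
          · rw [if_pos h2] at heq
            exact absurd heq.symm Sum.inl_ne_inr
          · rw [if_neg h2] at heq
            simp only [Sum.inl.injEq] at heq
            rw [(hsig _ _ _ _ heq).1]
        · rw [if_neg h'] at heq
          by_cases h2 : I (c (x i)) = i
          · rw [if_pos h2] at heq
            by_cases h2' : I (c (x i')) = i'
            · rw [if_pos h2'] at heq
              simp only [Sum.inr.injEq] at heq
              have : i = i' := by rw [← h2, heq, h2']
              rw [this]
            · rw [if_neg h2'] at heq
              exact absurd heq Sum.inr_ne_inl
          · rw [if_neg h2] at heq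
            by_cases h2' : I (c (x i')) = i'
            · rw [if_pos h2'] at heq
              exact absurd heq.symm Sum.inr_ne_inl
            · rw [if_neg h2'] at heq
              simp only [Sum.inl.injEq] at heq
              rw [(hsig _ _ _ _ heq).1]
  have hcard := Finset.card_le_card_of_injOn g hmaps hinj
  simpa [Finset.card_disjSum, Finset.card_sigma] using hcard
end

section
/- The unique sequence (a_n)_{n≥1} of real numbers satisfying a_1 = 1 and a_n = 2·∑_{m=1}^{n-1} a_m a_{n-m} for n ≥ 2 is given by a_n = (2^n / (4(2n-1))) · (2n)!/(n!)². -/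
open Finset

lemma catalan_aux_key (a : ℕ → ℝ) (h1 : a 1 = 1)
    (hrec : ∀ n, 2 ≤ n → a n = 2 * ∑ m ∈ Finset.Ico 1 n, a m * a (n - m)) :
    ∀ n, 1 ≤ n → a n = 2 ^ (n - 1) * (catalan (n - 1) : ℝ) := by
  intro n
  induction n using Nat.strong_induction_on with
  | _ n ih =>
    intro hn
    match n, hn with
    | 1, _ => simpa using h1
    | (k+2), _ =>
      rw [hrec (k+2) (by omega), Finset.sum_Ico_eq_sum_range]
      have hsum : ∀ i ∈ Finset.range (k + 2 - 1),
          a (1 + i) * a (k + 2 - (1 + i)) =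
            2 ^ k * ((catalan i : ℝ) * (catalan (k - i) : ℝ)) := by
        intro i hi
        simp only [Finset.mem_range] at hi
        rw [ih (1+i) (by omega) (by omega), ih (k+2-(1+i)) (by omega) (by omega),
          show (1+i-1) = i from by omega,
          show (k+2-(1+i)-1) = k - i from by omega]
        rw [mul_mul_mul_comm, ← pow_add, show i + (k - i) = k from by omega]
      rw [Finset.sum_congr rfl hsum, ← Finset.mul_sum]
      have hc : (catalan (k+1) : ℝ) =
          ∑ i ∈ Finset.range (k+1), (catalan i : ℝ) * (catalan (k - i) : ℝ) := by
        rw [catalan_succ, Fin.sum_univ_eq_sum_range (fun i => catalan i * catalan (k - i))]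
        push_cast
        rfl
      have : k + 2 - 1 = k + 1 := by omega
      rw [this, ← hc]
      ring

/-- The unique sequence with `a_1 = 1` and `a_n = 2 ∑_{m=1}^{n-1} a_m a_{n-m}` for `n ≥ 2`
is `a_n = (2^n / (4(2n-1))) · (2n)!/(n!)²`. -/
theorem catalan_type_recursion_closed_form (a : ℕ → ℝ) (h1 : a 1 = 1)
    (hrec : ∀ n, 2 ≤ n → a n = 2 * ∑ m ∈ Finset.Ico 1 n, a m * a (n - m)) :
    ∀ n, 1 ≤ n →
      a n = (2 : ℝ) ^ n / (4 * (2 * (n : ℝ) - 1)) *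
        ((Nat.factorial (2 * n) : ℝ) / ((Nat.factorial n : ℝ)) ^ 2) := by
  intro n hn
  obtain ⟨m, rfl⟩ : ∃ m, n = m + 1 := ⟨n - 1, by omega⟩
  rw [catalan_aux_key a h1 hrec (m+1) (by omega)]
  simp only [Nat.add_sub_cancel]
  -- centralBinom facts
  have hcb1 : ((m+1 : ℕ) : ℝ) * (Nat.centralBinom (m+1) : ℝ)
      = 2 * (2*m+1) * ((m+1 : ℕ) : ℝ) * (catalan m : ℝ) := by
    have h1' := Nat.succ_mul_centralBinom_succ m
    have h2' := succ_mul_catalan_eq_centralBinom m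
    have : (m+1) * Nat.centralBinom (m+1) = 2 * (2*m+1) * ((m+1) * catalan m) := by
      rw [h2']; exact h1'
    exact_mod_cast by rw [this]; push_cast; ring
  have hm1 : ((m+1 : ℕ) : ℝ) ≠ 0 := by positivity
  have hcb : (Nat.centralBinom (m+1) : ℝ) = 2 * (2*m+1) * (catalan m : ℝ) := by
    have := mul_left_cancel₀ hm1 (by linear_combination hcb1 :
      ((m+1 : ℕ) : ℝ) * (Nat.centralBinom (m+1) : ℝ)
        = ((m+1 : ℕ) : ℝ) * (2 * (2*m+1) * (catalan m : ℝ)))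
    exact this
  have hfact : (Nat.factorial (2*(m+1)) : ℝ)
      = (Nat.centralBinom (m+1) : ℝ) * (Nat.factorial (m+1) : ℝ)^2 := by
    have := Nat.choose_mul_factorial_mul_factorial (show m+1 ≤ 2*(m+1) by omega)
    have h2 : 2*(m+1) - (m+1) = m+1 := by omega
    rw [h2] at this
    rw [Nat.centralBinom]
    exact_mod_cast by rw [← this]; push_cast; ring
  rw [hfact, hcb]
  have hfne : (Nat.factorial (m+1) : ℝ) ≠ 0 := by positivity
  have hden : (2 * ((m : ℝ) + 1) - 1) ≠ 0 := by
    have : (0:ℝ) ≤ m := Nat.cast_nonneg m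
    nlinarith
  field_simp
  push_cast
  field_simp
  ring
end

section
/- Suppose (b_n)_{n≥1} is a sequence of nonnegative reals with b_1 ≤ 1 and b_n ≤ 2·∑_{m=1}^{n-1} b_m b_{n-m} for all n ≥ 2. Then b_n ≤ 8^{n-1}/(2n-1) for all n ≥ 1. -/
open Finset

lemma catalan_mul_le (k : ℕ) : (2 * k + 1) * catalan k ≤ 4 ^ k := by
  have h1 : (k + 1) * catalan k = Nat.centralBinom k := succ_mul_catalan_eq_centralBinom k
  have h2 : (2 * k + 1) * Nat.choose (2 * k) k = Nat.choose (2 * k + 1) (k + 1) * (k + 1) :=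
    Nat.add_one_mul_choose_eq (2 * k) k
  have h3 : Nat.choose (2 * k + 1) (k + 1) = Nat.choose (2 * k + 1) k := by
    rw [show k + 1 = 2 * k + 1 - k by omega, Nat.choose_symm (by omega)]
  have h4 : Nat.choose (2 * k + 1) k ≤ 4 ^ k := Nat.choose_middle_le_pow k
  have : (k + 1) * ((2 * k + 1) * catalan k) ≤ (k + 1) * 4 ^ k := by
    calc (k + 1) * ((2 * k + 1) * catalan k) = (2 * k + 1) * ((k + 1) * catalan k) := by ring
    _ = (2 * k + 1) * Nat.choose (2 * k) k := by rw [h1, Nat.centralBinom]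
    _ = Nat.choose (2 * k + 1) (k + 1) * (k + 1) := h2
    _ = (k + 1) * Nat.choose (2 * k + 1) k := by rw [h3]; ring
    _ ≤ (k + 1) * 4 ^ k := Nat.mul_le_mul_left _ h4
  exact Nat.le_of_mul_le_mul_left this (Nat.succ_pos k)

lemma catalan_range (k : ℕ) :
    (catalan (k + 1) : ℕ) = ∑ i ∈ range (k + 1), catalan i * catalan (k - i) := by
  rw [catalan_succ]
  exact Fin.sum_univ_eq_sum_range (fun i => catalan i * catalan (k - i)) (k + 1)

noncomputable def aseq (n : ℕ) : ℝ := 2 ^ (n - 1) * (catalan (n - 1) : ℝ)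

lemma aseq_conv (k : ℕ) :
    2 * ∑ m ∈ Finset.Ico 1 (k + 2), aseq m * aseq (k + 2 - m) = aseq (k + 2) := by
  rw [Finset.sum_Ico_eq_sum_range]
  have hsum : ∀ i ∈ range (k + 2 - 1), aseq (1 + i) * aseq (k + 2 - (1 + i)) =
      (2 : ℝ) ^ k * ((catalan i : ℝ) * (catalan (k - i) : ℝ)) := by
    intro i hi
    simp only [mem_range] at hi
    have h1 : 1 + i - 1 = i := by omega
    rw [show (1:ℕ) + i = i + 1 by omega]
    have h2 : k + 2 - (i + 1) = k + 1 - i := by omega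
    have h3 : k + 1 - i - 1 = k - i := by omega
    unfold aseq
    rw [h2, h3, Nat.add_sub_cancel]
    rw [show (2:ℝ)^i * (catalan i : ℝ) * ((2:ℝ)^(k-i) * (catalan (k-i) : ℝ))
        = ((2:ℝ)^i * (2:ℝ)^(k-i)) * ((catalan i : ℝ) * (catalan (k-i) : ℝ)) by ring,
      ← pow_add, show i + (k - i) = k by omega]
  rw [Finset.sum_congr rfl hsum, ← Finset.mul_sum]
  unfold aseq
  rw [show k + 2 - 1 = k + 1 by omega]
  have : ((catalan (k + 1) : ℕ) : ℝ) = ∑ i ∈ range (k + 1), (catalan i : ℝ) * (catalan (k - i) : ℝ) := by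
    rw [catalan_range]; push_cast; rfl
  rw [this]
  ring

lemma aseq_nonneg (n : ℕ) : 0 ≤ aseq n := by
  unfold aseq; positivity

/-- If `b_1 ≤ 1`, the `b_n ≥ 0`, and `b_n ≤ 2 ∑_{m=1}^{n-1} b_m b_{n-m}` for `n ≥ 2`,
then `b_n ≤ 8^{n-1}/(2n-1)` for all `n ≥ 1`. -/
theorem catalan_type_recursion_bound (b : ℕ → ℝ)
    (hpos : ∀ n, 1 ≤ n → 0 ≤ b n) (h1 : b 1 ≤ 1)
    (hrec : ∀ n, 2 ≤ n → b n ≤ 2 * ∑ m ∈ Finset.Ico 1 n, b m * b (n - m)) :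
    ∀ n, 1 ≤ n → b n ≤ (8 : ℝ) ^ (n - 1) / (2 * (n : ℝ) - 1) := by
  have key : ∀ n, 1 ≤ n → b n ≤ aseq n := by
    intro n
    induction n using Nat.strong_induction_on with
    | _ n ih =>
      intro hn
      rcases Nat.lt_or_ge n 2 with h2 | h2
      · interval_cases n
        · simpa [aseq, catalan_zero] using h1
      · obtain ⟨k, rfl⟩ : ∃ k, n = k + 2 := ⟨n - 2, by omega⟩
        calc b (k + 2) ≤ 2 * ∑ m ∈ Finset.Ico 1 (k + 2), b m * b (k + 2 - m) :=
              hrec _ (by omega)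
          _ ≤ 2 * ∑ m ∈ Finset.Ico 1 (k + 2), aseq m * aseq (k + 2 - m) := by
              apply mul_le_mul_of_nonneg_left _ (by norm_num)
              apply Finset.sum_le_sum
              intro m hm
              simp only [Finset.mem_Ico] at hm
              have hm1 : 1 ≤ m := hm.1
              have hm2 : 1 ≤ k + 2 - m := by omega
              exact mul_le_mul (ih m (by omega) hm1) (ih _ (by omega) hm2)
                (hpos _ hm2) (aseq_nonneg m)
          _ = aseq (k + 2) := aseq_conv k
  intro n hn
  obtain ⟨k, rfl⟩ : ∃ k, n = k + 1 := ⟨n - 1, by omega⟩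
  refine (key _ hn).trans ?_
  have hk0 : (0:ℝ) ≤ (k:ℝ) := Nat.cast_nonneg k
  have hpos2 : (0:ℝ) < 2 * ((k : ℝ) + 1) - 1 := by linarith
  rw [show ((k:ℕ) + 1 - 1) = k by omega]
  push_cast
  rw [le_div_iff₀ hpos2]
  unfold aseq
  rw [Nat.add_sub_cancel]
  have hnat : ((2 * k + 1) * catalan k : ℕ) ≤ ((4 ^ k : ℕ) : ℕ) := catalan_mul_le k
  have hreal : ((2 * k + 1 : ℕ) : ℝ) * (catalan k : ℝ) ≤ (4 : ℝ) ^ k := by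
    exact_mod_cast hnat
  have h8 : (8 : ℝ) ^ k = 2 ^ k * 4 ^ k := by
    rw [← mul_pow]; norm_num
  push_cast at hreal
  have h2k : (0:ℝ) ≤ (2:ℝ) ^ k := by positivity
  calc 2 ^ k * (catalan k : ℝ) * (2 * ((k:ℝ) + 1) - 1)
      = 2 ^ k * ((2 * (k:ℝ) + 1) * (catalan k : ℝ)) := by ring
    _ ≤ 2 ^ k * (4 : ℝ) ^ k := by
        apply mul_le_mul_of_nonneg_left _ h2k
        linarith
    _ = (8:ℝ) ^ k := h8.symm
end

section
/- Let F be a symmetric (exchangeable) probability measure on the sphere S^{N-1}(√N) ⊂ ℝ^N (so ∑_{i=1}^N v_i² = N almost surely), with N ≥ 2. Write e_i := v_i². Then for all 1 ≤ n ≤ N/2 + 1, the non-repeated energy moments satisfy 0 ≤ E[e_1 e_2 ⋯ e_n] ≤ 2^{n-1}. -/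
open MeasureTheory Finset

private lemma meas_prod {N : ℕ} (s : Finset (Fin N)) :
    Measurable (fun v : Fin N → ℝ => ∏ i ∈ s, (v i) ^ 2) :=
  Finset.measurable_prod s fun i _ => (measurable_pi_apply i).pow_const 2

private lemma energy_ae_bdd {N : ℕ} (F : Measure (Fin N → ℝ))
    (hsphere : ∀ᵐ v ∂F, ∑ i, (v i) ^ 2 = (N : ℝ)) :
    ∀ᵐ v ∂F, ∀ i, (v i) ^ 2 ≤ (N : ℝ) := by
  filter_upwards [hsphere] with v hv i
  calc (v i) ^ 2 ≤ ∑ j, (v j) ^ 2 :=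
        Finset.single_le_sum (f := fun j => (v j) ^ 2) (fun j _ => sq_nonneg _) (mem_univ i)
    _ = N := hv

private lemma integrable_sq_mul_prod {N : ℕ} (F : Measure (Fin N → ℝ))
    [IsProbabilityMeasure F]
    (hsphere : ∀ᵐ v ∂F, ∑ i, (v i) ^ 2 = (N : ℝ)) (s : Finset (Fin N)) (i : Fin N) :
    Integrable (fun v => (v i) ^ 2 * ∏ j ∈ s, (v j) ^ 2) F := by
  refine Integrable.mono' (integrable_const ((N : ℝ) * (N : ℝ) ^ s.card))
    (((measurable_pi_apply i).pow_const 2).mul (meas_prod s)).aestronglyMeasurable ?_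
  filter_upwards [energy_ae_bdd F hsphere] with v hv
  rw [Real.norm_eq_abs, abs_of_nonneg (by positivity)]
  have hprod : (∏ j ∈ s, (v j) ^ 2) ≤ (N : ℝ) ^ s.card := by
    calc (∏ j ∈ s, (v j) ^ 2) ≤ ∏ _j ∈ s, (N : ℝ) :=
          Finset.prod_le_prod (fun j _ => sq_nonneg _) (fun j _ => hv j)
      _ = (N : ℝ) ^ s.card := by rw [Finset.prod_const]
  exact mul_le_mul (hv i) hprod (Finset.prod_nonneg fun j _ => sq_nonneg _)
    (Nat.cast_nonneg N)

private lemma integral_comp_perm {N : ℕ} (F : Measure (Fin N → ℝ))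
    (hsym : ∀ σ : Equiv.Perm (Fin N), Measure.map (fun v => v ∘ σ) F = F)
    (σ : Equiv.Perm (Fin N)) (f : (Fin N → ℝ) → ℝ) (hf : Measurable f) :
    ∫ v, f (v ∘ σ) ∂F = ∫ v, f v ∂F := by
  conv_rhs => rw [← hsym σ]
  exact (integral_map (φ := fun v : Fin N → ℝ => v ∘ ⇑σ)
    (measurable_pi_lambda _ fun i =>
      measurable_pi_apply (σ i)).aemeasurable hf.aestronglyMeasurable).symm

private lemma integral_insert_swap {N : ℕ} (F : Measure (Fin N → ℝ))
    (hsym : ∀ σ : Equiv.Perm (Fin N), Measure.map (fun v => v ∘ σ) F = F)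
    {s : Finset (Fin N)} {i j : Fin N} (hi : i ∉ s) (hj : j ∉ s) :
    ∫ v, ∏ t ∈ insert i s, (v t) ^ 2 ∂F = ∫ v, ∏ t ∈ insert j s, (v t) ^ 2 ∂F := by
  have h := integral_comp_perm F hsym (Equiv.swap i j)
    (fun v => ∏ t ∈ insert j s, (v t) ^ 2) (meas_prod _)
  rw [← h]
  refine integral_congr_ae (Filter.Eventually.of_forall fun v => ?_)
  show ∏ t ∈ insert i s, (v t) ^ 2 = ∏ t ∈ insert j s, ((v ∘ ⇑(Equiv.swap i j)) t) ^ 2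
  rw [Finset.prod_insert hi, Finset.prod_insert hj]
  simp only [Function.comp_apply, Equiv.swap_apply_right]
  congr 1
  refine Finset.prod_congr rfl fun t ht => ?_
  rw [Equiv.swap_apply_of_ne_of_ne (ne_of_mem_of_not_mem ht hi)
    (ne_of_mem_of_not_mem ht hj)]

private lemma card_filter_lt {N k : ℕ} (hk : k < N) :
    (Finset.univ.filter (fun i : Fin N => (i : ℕ) < k)).card = k := by
  have : Finset.univ.filter (fun i : Fin N => (i : ℕ) < k) = Finset.Iio (⟨k, hk⟩ : Fin N) := by
    ext t
    simp [Fin.lt_def]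
  rw [this, Fin.card_Iio]

private lemma key_ineq {N : ℕ} (F : Measure (Fin N → ℝ)) [IsProbabilityMeasure F]
    (hsym : ∀ σ : Equiv.Perm (Fin N), Measure.map (fun v => v ∘ σ) F = F)
    (hsphere : ∀ᵐ v ∂F, ∑ i, (v i) ^ 2 = (N : ℝ)) {k : ℕ} (hk : k < N) :
    ((N : ℝ) - k) * (∫ v, ∏ i ∈ Finset.univ.filter (fun i : Fin N => (i : ℕ) < k + 1),
        (v i) ^ 2 ∂F)
      ≤ (N : ℝ) * ∫ v, ∏ i ∈ Finset.univ.filter (fun i : Fin N => (i : ℕ) < k),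
        (v i) ^ 2 ∂F := by
  set S : Finset (Fin N) := Finset.univ.filter (fun i : Fin N => (i : ℕ) < k) with hS
  set j₀ : Fin N := ⟨k, hk⟩ with hj₀
  have hj₀S : j₀ ∉ S := by simp [hS, hj₀]
  have hSsucc : Finset.univ.filter (fun i : Fin N => (i : ℕ) < k + 1) = insert j₀ S := by
    ext t
    simp only [hS, Finset.mem_filter, Finset.mem_univ, true_and, Finset.mem_insert,
      Nat.lt_succ_iff_lt_or_eq, Fin.ext_iff]
    tauto
  -- m(k+1) as integral of insert
  have h1 : (N : ℝ) * ∫ v, ∏ i ∈ S, (v i) ^ 2 ∂F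
      = ∑ i : Fin N, ∫ v, (v i) ^ 2 * ∏ j ∈ S, (v j) ^ 2 ∂F := by
    rw [← integral_const_mul]
    rw [integral_congr_ae (g := fun v => ∑ i : Fin N, (v i) ^ 2 * ∏ j ∈ S, (v j) ^ 2)]
    · exact integral_finset_sum _ fun i _ => integrable_sq_mul_prod F hsphere S i
    · filter_upwards [hsphere] with v hv
      rw [← Finset.sum_mul, hv]
  -- each term for i ∉ S equals the (k+1)-moment
  have h2 : ∀ i : Fin N, i ∉ S →
      ∫ v, (v i) ^ 2 * ∏ j ∈ S, (v j) ^ 2 ∂F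
        = ∫ v, ∏ t ∈ insert j₀ S, (v t) ^ 2 ∂F := by
    intro i hiS
    have : (fun v : Fin N → ℝ => (v i) ^ 2 * ∏ j ∈ S, (v j) ^ 2)
        = fun v => ∏ t ∈ insert i S, (v t) ^ 2 := by
      funext v; rw [Finset.prod_insert hiS]
    rw [this, integral_insert_swap F hsym hiS hj₀S]
  have hcard : (Finset.univ.filter (fun i : Fin N => i ∉ S)).card = N - k := by
    have hcompl : Finset.univ.filter (fun i : Fin N => i ∉ S) = Sᶜ := by
      ext t; simp
    rw [hcompl, Finset.card_compl, Fintype.card_fin, hS, card_filter_lt hk]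
  have hsplit : ∑ i : Fin N, ∫ v, (v i) ^ 2 * ∏ j ∈ S, (v j) ^ 2 ∂F
      = (∑ i ∈ Finset.univ.filter (fun i : Fin N => i ∈ S),
          ∫ v, (v i) ^ 2 * ∏ j ∈ S, (v j) ^ 2 ∂F)
        + ((N : ℝ) - k) * ∫ v, ∏ t ∈ insert j₀ S, (v t) ^ 2 ∂F := by
    rw [← Finset.sum_filter_add_sum_filter_not Finset.univ (fun i : Fin N => i ∈ S)]
    congr 1
    rw [Finset.sum_congr rfl (fun i hi => h2 i (Finset.mem_filter.mp hi).2),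
      Finset.sum_const, hcard, nsmul_eq_mul, Nat.cast_sub hk.le]
  have hnn : 0 ≤ ∑ i ∈ Finset.univ.filter (fun i : Fin N => i ∈ S),
      ∫ v, (v i) ^ 2 * ∏ j ∈ S, (v j) ^ 2 ∂F :=
    Finset.sum_nonneg fun i _ => integral_nonneg fun v =>
      mul_nonneg (sq_nonneg _) (Finset.prod_nonneg fun j _ => sq_nonneg _)
  rw [hSsucc]
  rw [h1, hsplit]
  linarith

/-- For a symmetric probability measure on the sphere `S^{N-1}(√N)` (so `∑ v_i² = N` a.s.),
with `N ≥ 2` and `1 ≤ n ≤ N/2 + 1`, the non-repeated energy moments satisfy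
`0 ≤ E[e_1 ⋯ e_n] ≤ 2^{n-1}` where `e_i = v_i²`. -/
theorem nonrepeated_energy_moment_bound (N : ℕ) (hN : 2 ≤ N)
    (F : Measure (Fin N → ℝ)) [IsProbabilityMeasure F]
    (hsym : ∀ σ : Equiv.Perm (Fin N), Measure.map (fun v => v ∘ σ) F = F)
    (hsphere : ∀ᵐ v ∂F, ∑ i, (v i) ^ 2 = (N : ℝ))
    (n : ℕ) (hn1 : 1 ≤ n) (hn2 : (n : ℝ) ≤ (N : ℝ) / 2 + 1) :
    0 ≤ ∫ v, (∏ i ∈ Finset.univ.filter (fun i : Fin N => (i : ℕ) < n), (v i) ^ 2) ∂F ∧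
    ∫ v, (∏ i ∈ Finset.univ.filter (fun i : Fin N => (i : ℕ) < n), (v i) ^ 2) ∂F ≤
      (2 : ℝ) ^ (n - 1) := by
  set m : ℕ → ℝ := fun k =>
    ∫ v, (∏ i ∈ Finset.univ.filter (fun i : Fin N => (i : ℕ) < k), (v i) ^ 2) ∂F with hm
  have hmnonneg : ∀ k, 0 ≤ m k := fun k =>
    integral_nonneg fun v => Finset.prod_nonneg fun i _ => sq_nonneg _
  have hNpos : (0 : ℝ) < N := by positivity
  refine ⟨hmnonneg n, ?_⟩
  have hm0 : m 0 = 1 := by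
    have : Finset.univ.filter (fun i : Fin N => (i : ℕ) < 0) = ∅ := by
      ext t; simp
    simp [hm, this]
  have hm1 : m 1 ≤ 1 := by
    have hk : 0 < N := by omega
    have h := key_ineq F hsym hsphere hk
    rw [show ((0 : ℕ) : ℝ) = 0 by norm_num] at h  -- harmless
    have h' : (N : ℝ) * m 1 ≤ (N : ℝ) * m 0 := by
      simpa [hm, sub_zero] using h
    have := (mul_le_mul_iff_right₀ hNpos).mp h'
    linarith [hm0 ▸ this]
  have hstep : ∀ k : ℕ, (k : ℝ) ≤ (N : ℝ) / 2 → m (k + 1) ≤ 2 * m k := by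
    intro k hk2
    have hkN : k < N := by
      have : (k : ℝ) < N := by linarith
      exact_mod_cast this
    have h := key_ineq F hsym hsphere hkN
    have hNk : (0 : ℝ) < (N : ℝ) - k := by linarith
    have hb : (N : ℝ) * m k ≤ ((N : ℝ) - k) * (2 * m k) := by
      have := hmnonneg k
      nlinarith
    have : ((N : ℝ) - k) * m (k + 1) ≤ ((N : ℝ) - k) * (2 * m k) := le_trans h hb
    exact le_of_mul_le_mul_left this hNk
  have main : ∀ k : ℕ, 1 ≤ k → (k : ℝ) ≤ (N : ℝ) / 2 + 1 → m k ≤ 2 ^ (k - 1) := by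
    intro k
    induction k with
    | zero => intro h; omega
    | succ k ih =>
      intro _ hk2
      rcases Nat.eq_zero_or_pos k with rfl | hkpos
      · simpa using hm1
      · have hkle : (k : ℝ) ≤ (N : ℝ) / 2 := by
          push_cast at hk2 ⊢; linarith
        have h1 := hstep k hkle
        have h2 := ih hkpos (by linarith)
        calc m (k + 1) ≤ 2 * m k := h1
          _ ≤ 2 * 2 ^ (k - 1) := by linarith
          _ = 2 ^ (k - 1 + 1) := by ring
          _ = 2 ^ (k + 1 - 1) := by congr 1; omega
  exact main n hn1 hn2
end

section
/- For any partition classifier r of order n with components r_1 ≥ ... ≥ r_n ≥ 0 summing to n, let L = len(r) be the number of nonzero components and define (M_n)_{r,r} := 2·∑_{i=1}^{L} (2 I_{r_i,0} - 1), where I_{m,0} = 2^{-2m}C(2m,m). Then (M_n)_{r,r} ≤ -(1/2)·∑_{i=1}^L 1{r_i = 2} - (3/4)·∑_{i=1}^L 1{r_i ≥ 3}; in particular, if r has at least one repeated component (some r_i ≥ 2), then (M_n)_{r,r} ≤ -1/2, and if r ≠ (2,1,...,1), then (M_n)_{r,r} ≤ -3/4. -/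
open Finset

noncomputable def tI (m : ℕ) : ℝ := (2:ℝ)^(-(2*(m:ℤ))) * (Nat.choose (2*m) m : ℝ)

lemma tI_succ_le (m : ℕ) : tI (m+1) ≤ tI m := by
  have h := Nat.succ_mul_centralBinom_succ m
  have h' : ((m:ℝ)+1) * (Nat.choose (2*(m+1)) (m+1) : ℝ) = 2*(2*m+1) * (Nat.choose (2*m) m : ℝ) := by
    have := congrArg (fun k : ℕ => (k : ℝ)) h
    simpa [Nat.centralBinom, Nat.cast_mul] using this
  have hb : (Nat.choose (2*(m+1)) (m+1) : ℝ) ≤ 4 * (Nat.choose (2*m) m : ℝ) := by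
    have hm : (0:ℝ) < (m:ℝ) + 1 := by positivity
    rw [← mul_le_mul_iff_right₀ hm, h']
    have hnn : (0:ℝ) ≤ (Nat.choose (2*m) m : ℝ) := by positivity
    nlinarith
  unfold tI
  have hpow : (2:ℝ)^(-(2*((m:ℤ)+1))) = (2:ℝ)^(-(2*(m:ℤ))) / 4 := by
    rw [show -(2*((m:ℤ)+1)) = -(2*(m:ℤ)) + (-2) by ring, zpow_add₀ (by norm_num : (2:ℝ) ≠ 0)]
    norm_num
    ring
  push_cast
  rw [hpow]
  have hp : (0:ℝ) < (2:ℝ)^(-(2*(m:ℤ))) := by positivity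
  calc (2:ℝ)^(-(2*(m:ℤ))) / 4 * (Nat.choose (2*(m+1)) (m+1) : ℝ)
      ≤ (2:ℝ)^(-(2*(m:ℤ))) / 4 * (4 * (Nat.choose (2*m) m : ℝ)) := by
        apply mul_le_mul_of_nonneg_left _ (by positivity)
        convert hb using 3 <;> push_cast <;> ring
    _ = (2:ℝ)^(-(2*(m:ℤ))) * (Nat.choose (2*m) m : ℝ) := by ring

lemma tI_le_of_three (m : ℕ) (hm : 3 ≤ m) : tI m ≤ 5/16 := by
  induction m, hm using Nat.le_induction with
  | base => unfold tI; norm_num [Nat.choose]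
  | succ k hk ih => exact (tI_succ_le k).trans ih

lemma term_bound (m : ℕ) (hm : 0 < m) :
    2 * (2 * tI m - 1) ≤ (if m = 2 then -(1/2 : ℝ) else if 3 ≤ m then -(3/4) else 0) := by
  rcases Nat.lt_or_ge m 3 with h3 | h3
  · interval_cases m
    · simp [tI]; norm_num
    · simp [tI]; norm_num [Nat.choose]
  · have := tI_le_of_three m h3
    have hne : m ≠ 2 := by omega
    simp [hne, h3]
    linarith

lemma down_closed_mem (n : ℕ) (S : Finset (Fin n))
    (hdc : ∀ i j : Fin n, i ≤ j → j ∈ S → i ∈ S) (i : Fin n) :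
    i ∈ S ↔ (i : ℕ) < S.card := by
  constructor
  · intro hi
    have hsub : Finset.Iic i ⊆ S := fun j hj => hdc j i (Finset.mem_Iic.mp hj) hi
    have := Finset.card_le_card hsub
    rw [Fin.card_Iic] at this
    omega
  · intro hi
    by_contra hni
    have hsub : S ⊆ Finset.Iio i := by
      intro j hj
      rw [Finset.mem_Iio]
      by_contra hji
      exact hni (hdc i j (le_of_not_gt hji) hj)
    have := Finset.card_le_card hsub
    rw [Fin.card_Iio] at this
    omega

/-- For a partition classifier `r` of order `n` (decreasing components summing to `n`),
the diagonal matrix element `(M_n)_{r,r} = 2 ∑_{i : r_i > 0} (2 I_{r_i,0} - 1)`, with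
`I_{m,0} = 2^{-2m} C(2m,m)`, satisfies
`(M_n)_{r,r} ≤ -(1/2)·#{i : r_i = 2} - (3/4)·#{i : r_i ≥ 3}`; in particular it is `≤ -1/2`
whenever some `r_i ≥ 2`, and `≤ -3/4` if in addition `r ≠ (2,1,…,1)`. -/
theorem diagonal_matrix_element_bound (n : ℕ) (hn : 1 ≤ n) (r : Fin n → ℕ)
    (hmono : ∀ i j : Fin n, i ≤ j → r j ≤ r i)
    (hsum : ∑ i, r i = n) :
    (2 * ∑ i ∈ Finset.univ.filter (fun i : Fin n => 0 < r i),
        (2 * ((2 : ℝ) ^ (-(2 * (r i : ℤ))) * (Nat.choose (2 * r i) (r i) : ℝ)) - 1) ≤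
      -(1 / 2) * ((Finset.univ.filter (fun i : Fin n => r i = 2)).card : ℝ)
        - (3 / 4) * ((Finset.univ.filter (fun i : Fin n => 3 ≤ r i)).card : ℝ)) ∧
    ((∃ i : Fin n, 2 ≤ r i) →
      2 * ∑ i ∈ Finset.univ.filter (fun i : Fin n => 0 < r i),
        (2 * ((2 : ℝ) ^ (-(2 * (r i : ℤ))) * (Nat.choose (2 * r i) (r i) : ℝ)) - 1) ≤
      -(1 / 2)) ∧
    ((∃ i : Fin n, 2 ≤ r i) →
      r ≠ (fun i : Fin n => if (i : ℕ) = 0 then 2 else if (i : ℕ) + 1 < n then 1 else 0) →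
      2 * ∑ i ∈ Finset.univ.filter (fun i : Fin n => 0 < r i),
        (2 * ((2 : ℝ) ^ (-(2 * (r i : ℤ))) * (Nat.choose (2 * r i) (r i) : ℝ)) - 1) ≤
      -(3 / 4)) := by
  set a := (Finset.univ.filter (fun i : Fin n => r i = 2)).card with ha_def
  set b := (Finset.univ.filter (fun i : Fin n => 3 ≤ r i)).card with hb_def
  have main : 2 * ∑ i ∈ Finset.univ.filter (fun i : Fin n => 0 < r i),
        (2 * ((2 : ℝ) ^ (-(2 * (r i : ℤ))) * (Nat.choose (2 * r i) (r i) : ℝ)) - 1) ≤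
      -(1 / 2) * (a : ℝ) - (3 / 4) * (b : ℝ) := by
    calc 2 * ∑ i ∈ Finset.univ.filter (fun i : Fin n => 0 < r i),
          (2 * ((2 : ℝ) ^ (-(2 * (r i : ℤ))) * (Nat.choose (2 * r i) (r i) : ℝ)) - 1)
        = ∑ i ∈ Finset.univ.filter (fun i : Fin n => 0 < r i), 2 * (2 * tI (r i) - 1) := by
          rw [Finset.mul_sum]; simp only [tI]
      _ = ∑ i : Fin n, if 0 < r i then 2 * (2 * tI (r i) - 1) else 0 := Finset.sum_filter _ _
      _ ≤ ∑ i : Fin n, (if r i = 2 then -(1/2 : ℝ) else if 3 ≤ r i then -(3/4) else 0) := by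
          apply Finset.sum_le_sum
          intro i _
          by_cases hpos : 0 < r i
          · simpa [hpos] using term_bound (r i) hpos
          · have h0 : r i = 0 := by omega
            simp [hpos, h0]
      _ = ∑ i : Fin n, ((if r i = 2 then -(1/2 : ℝ) else 0) + (if 3 ≤ r i then -(3/4 : ℝ) else 0)) := by
          apply Finset.sum_congr rfl
          intro i _
          by_cases h2 : r i = 2
          · have : ¬ 3 ≤ r i := by omega
            simp [h2, this]
          · simp [h2]
      _ = -(1 / 2) * (a : ℝ) - (3 / 4) * (b : ℝ) := by
          rw [Finset.sum_add_distrib, ← Finset.sum_filter, ← Finset.sum_filter,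
            Finset.sum_const, Finset.sum_const, ha_def, hb_def]
          simp [nsmul_eq_mul]
          ring
  have hann : (0:ℝ) ≤ (a : ℝ) := Nat.cast_nonneg a
  have hbnn : (0:ℝ) ≤ (b : ℝ) := Nat.cast_nonneg b
  refine ⟨main, ?_, ?_⟩
  · rintro ⟨i, hi⟩
    have hab : 1 ≤ a + b := by
      rcases Nat.lt_or_ge (r i) 3 with h3 | h3
      · have h2 : r i = 2 := by omega
        have : i ∈ Finset.univ.filter (fun i : Fin n => r i = 2) := by
          simp [h2]
        have := Finset.card_pos.mpr ⟨i, this⟩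
        omega
      · have : i ∈ Finset.univ.filter (fun i : Fin n => 3 ≤ r i) := by
          simp [h3]
        have := Finset.card_pos.mpr ⟨i, this⟩
        omega
    have : (1:ℝ) ≤ (a:ℝ) + (b:ℝ) := by exact_mod_cast Nat.one_le_cast.mpr hab
    linarith
  · rintro ⟨i0, hi0⟩ hne
    rcases Nat.lt_or_ge b 1 with hb0 | hb1
    · -- b = 0
      have hb0' : b = 0 := by omega
      have hle2 : ∀ i : Fin n, r i ≤ 2 := by
        intro i
        by_contra h
        have h3 : 3 ≤ r i := by omega
        have : i ∈ Finset.univ.filter (fun i : Fin n => 3 ≤ r i) := by simp [h3]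
        have := Finset.card_pos.mpr ⟨i, this⟩
        omega
      rcases Nat.lt_or_ge a 2 with ha1 | ha2
      · -- a ≤ 1 : derive r = the special function, contradiction
        exfalso
        apply hne
        have hri0 : r i0 = 2 := le_antisymm (hle2 i0) hi0
        have hmemi0 : i0 ∈ Finset.univ.filter (fun i : Fin n => r i = 2) := by simp [hri0]
        have ha_eq : a = 1 := by
          have := Finset.card_pos.mpr ⟨i0, hmemi0⟩
          omega
        -- downward-closedness
        have hS2 : ∀ i : Fin n, r i = 2 ↔ (i : ℕ) < 1 := by
          intro i
          have := down_closed_mem n (Finset.univ.filter (fun i : Fin n => r i = 2))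
            (by
              intro i j hij hj
              simp only [Finset.mem_filter, Finset.mem_univ, true_and] at *
              have := hmono i j hij
              have := hle2 i
              omega) i
          simpa [ha_eq.symm ▸ (rfl : a = a), ← ha_def, ha_eq] using this
        -- n ≥ 2
        have hn2 : 2 ≤ n := by
          have : r i0 ≤ ∑ i, r i := Finset.single_le_sum (fun i _ => Nat.zero_le _) (Finset.mem_univ i0)
          omega
        -- card of support
        have hsupp : (Finset.univ.filter (fun i : Fin n => 0 < r i)).card = n - 1 := by
          have hsum' : ∑ i ∈ Finset.univ.filter (fun i : Fin n => 0 < r i), r i = n := by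
            rw [Finset.sum_filter_of_ne]
            · exact hsum
            · intro x _ hx
              omega
          have hdecomp : ∑ i ∈ Finset.univ.filter (fun i : Fin n => 0 < r i), r i
              = (Finset.univ.filter (fun i : Fin n => 0 < r i)).card
                + ∑ i ∈ Finset.univ.filter (fun i : Fin n => 0 < r i),
                    (if r i = 2 then 1 else 0) := by
            rw [Finset.card_eq_sum_ones, ← Finset.sum_add_distrib]
            apply Finset.sum_congr rfl
            intro i hi
            simp only [Finset.mem_filter, Finset.mem_univ, true_and] at hi
            have := hle2 i
            by_cases h2 : r i = 2 <;> simp [h2] <;> omega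
          have hsum2 : ∑ i ∈ Finset.univ.filter (fun i : Fin n => 0 < r i),
              (if r i = 2 then 1 else 0) = a := by
            have hset : (Finset.univ.filter (fun i : Fin n => 0 < r i)).filter (fun i => r i = 2)
                = Finset.univ.filter (fun i : Fin n => r i = 2) := by
              ext x
              simp only [Finset.mem_filter, Finset.mem_univ, true_and]
              omega
            rw [← Finset.sum_filter, hset, ha_def, Finset.card_eq_sum_ones]
          rw [hsum2] at hdecomp
          omega
        have hS1 : ∀ i : Fin n, 0 < r i ↔ (i : ℕ) < n - 1 := by
          intro i
          have := down_closed_mem n (Finset.univ.filter (fun i : Fin n => 0 < r i))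
            (by
              intro i j hij hj
              simp only [Finset.mem_filter, Finset.mem_univ, true_and] at *
              have := hmono i j hij
              omega) i
          simpa [hsupp] using this
        funext i
        by_cases h0 : (i : ℕ) = 0
        · have : (i : ℕ) < 1 := by omega
          have := (hS2 i).mpr this
          simp [h0, this]
        · have hne2 : r i ≠ 2 := fun h => by have := (hS2 i).mp h; omega
          by_cases h1 : (i : ℕ) + 1 < n
          · have : 0 < r i := (hS1 i).mpr (by omega)
            have : r i = 1 := by have := hle2 i; omega
            simp [h0, h1, this]
          · have : ¬ 0 < r i := fun h => by have := (hS1 i).mp h; have := i.isLt; omega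
            have : r i = 0 := by omega
            simp [h0, h1, this]
      · -- a ≥ 2
        have : (2:ℝ) ≤ (a:ℝ) := by exact_mod_cast ha2
        linarith
    · -- b ≥ 1
      have : (1:ℝ) ≤ (b:ℝ) := by exact_mod_cast hb1
      linarith
end
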